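/- Suppose d is odd and η(e0) = η(e1) = η(e2) = -1. Then the number of points (x0 : x1 : x2) ∈ ℙ²(F_q) with C(x0, x1, x2) = 0 equals (3q² - 6q + 63)/8; equivalently, writing n = (q-7)/2 for the degree of the nonlinear part of C, it equals n(n + q - 1)/2 + 3q. -/

import Mathlib

open MvPolynomial Finset

set_option maxHeartbeats 1000000
set_option linter.unusedSectionVars false
set_option linter.unnecessarySeqFocus false
set_option linter.unusedTactic false

/-- The polynomial `C = X0^d + X1^d + X2^d + (e0·X0 + e1·X1 + e2·X2)^d` over `F_q`. -/
noncomputable def fermatSlice (F : Type) [Field F] (d : ℕ) (e0 e1 e2 : F) :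
    MvPolynomial (Fin 3) F :=
  X 0 ^ d + X 1 ^ d + X 2 ^ d +
    (MvPolynomial.C e0 * X 0 + MvPolynomial.C e1 * X 1 + MvPolynomial.C e2 * X 2) ^ d

set_option linter.unusedSectionVars false
section
variable {F : Type} [Field F] [Fintype F] [DecidableEq F]

local notation "χ" => quadraticChar F
local notation "q" => (Fintype.card F : ℤ)

lemma tri (x : F) : (χ x : ℤ) = -1 ∨ (χ x : ℤ) = 0 ∨ (χ x : ℤ) = 1 := by
  by_cases hx : x = 0
  · right; left; simp [hx]
  · rcases quadraticChar_dichotomy hx with h | h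
    · right; right; exact h
    · left; exact h

lemma sq_eq (x : F) : (χ x : ℤ)^2 = if x = 0 then 0 else 1 := by
  by_cases hx : x = 0
  · simp [hx]
  · rw [if_neg hx]; exact quadraticChar_sq_one hx

lemma s20 : ∑ x : F, (χ x : ℤ)^2 = q - 1 := by
  calc ∑ x : F, (χ x : ℤ)^2 = ∑ x : F, (1 - if x = (0:F) then (1:ℤ) else 0) := by
        refine Finset.sum_congr rfl fun x _ => ?_
        rw [sq_eq]; by_cases hx : x = 0 <;> simp [hx]
    _ = q - 1 := by
        rw [Finset.sum_sub_distrib, Finset.sum_const, Finset.sum_ite_eq' univ (0:F) fun _ => (1:ℤ)]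
        simp [mul_comm]

lemma s40 : ∑ x : F, (χ x : ℤ)^4 = q - 1 := by
  rw [← s20]
  refine Finset.sum_congr rfl fun x _ => ?_
  rcases tri x with h | h | h <;> rw [h] <;> norm_num

lemma shift_sum (g : F → ℤ) (c : F) : ∑ x : F, g (c + x) = ∑ x : F, g x :=
  Fintype.sum_equiv (Equiv.addLeft c) _ _ fun _ => rfl

lemma s10 (hF2 : ringChar F ≠ 2) : ∑ x : F, (χ x : ℤ) = 0 := quadraticChar_sum_zero hF2

lemma s01 (hF2 : ringChar F ≠ 2) (c : F) : ∑ x : F, (χ (c + x) : ℤ) = 0 := by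
  rw [shift_sum (fun x => (χ x : ℤ)) c]; exact s10 hF2

lemma s02 (c : F) : ∑ x : F, (χ (c + x) : ℤ)^2 = q - 1 := by
  rw [shift_sum (fun x => (χ x : ℤ)^2) c]; exact s20

lemma s21 (hF2 : ringChar F ≠ 2) (c : F) :
    ∑ x : F, (χ x : ℤ)^2 * χ (c + x) = -(χ c) := by
  calc ∑ x : F, (χ x : ℤ)^2 * χ (c + x)
      = ∑ x : F, ((χ (c + x) : ℤ) - if x = (0:F) then (χ (c + x) : ℤ) else 0) := by
        refine Finset.sum_congr rfl fun x _ => ?_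
        rw [sq_eq]; by_cases hx : x = 0 <;> simp [hx]
    _ = -(χ c) := by
        rw [Finset.sum_sub_distrib, s01 hF2, Finset.sum_ite_eq' univ (0:F)]
        simp

lemma s12 (hF2 : ringChar F ≠ 2) (hneg : (χ (-1) : ℤ) = -1) (c : F) :
    ∑ x : F, (χ x : ℤ) * (χ (c + x) : ℤ)^2 = χ c := by
  calc ∑ x : F, (χ x : ℤ) * (χ (c + x) : ℤ)^2
      = ∑ x : F, ((χ x : ℤ) - if x = (-c : F) then (χ x : ℤ) else 0) := by
        refine Finset.sum_congr rfl fun x _ => ?_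
        rw [sq_eq]
        by_cases hx : x = -c
        · simp [hx]
        · have : c + x ≠ 0 := fun hcx => hx (by linear_combination hcx)
          simp [this, hx]
    _ = χ c := by
        rw [Finset.sum_sub_distrib, s10 hF2, Finset.sum_ite_eq' univ (-c : F)]
        have : (χ (-c) : ℤ) = -(χ c) := by
          rw [show (-c : F) = -1 * c by ring, map_mul, hneg]; ring
        simp [this]

lemma s22 (c : F) :
    ∑ x : F, (χ x : ℤ)^2 * (χ (c + x) : ℤ)^2 = q - 1 - (χ c : ℤ)^2 := by
  calc ∑ x : F, (χ x : ℤ)^2 * (χ (c + x) : ℤ)^2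
      = ∑ x : F, ((χ (c + x) : ℤ)^2 - if x = (0:F) then (χ (c + x) : ℤ)^2 else 0) := by
        refine Finset.sum_congr rfl fun x _ => ?_
        rw [sq_eq x]; by_cases hx : x = 0 <;> simp [hx]
    _ = _ := by
        rw [Finset.sum_sub_distrib, s02, Finset.sum_ite_eq' univ (0:F)]
        simp


lemma s11 (hF2 : ringChar F ≠ 2) (c : F) :
    ∑ x : F, (χ x : ℤ) * χ (c + x) = q * (1 - (χ c : ℤ)^2) - 1 := by
  by_cases hc : c = 0
  · subst hc
    simp only [quadraticChar_zero, zero_add]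
    have : ∀ x : F, (χ x : ℤ) * χ x = (χ x : ℤ)^2 := fun x => (sq (χ x : ℤ)).symm
    rw [Finset.sum_congr rfl fun x _ => this x, s20]
    push_cast; ring
  · have hcq : (χ c : ℤ)^2 = 1 := quadraticChar_sq_one hc
    rw [hcq]
    have step1 : ∑ x : F, (χ x : ℤ) * χ (c + x)
        = ∑ x ∈ (univ : Finset F).erase 0, (χ x : ℤ) * χ (c + x) := by
      rw [← Finset.add_sum_erase _ _ (mem_univ (0:F))]
      simp
    have step2 : ∑ x ∈ (univ : Finset F).erase 0, (χ x : ℤ) * χ (c + x)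
        = ∑ u ∈ (univ : Finset F).erase 1, (χ u : ℤ) := by
      refine Finset.sum_nbij' (fun x => 1 + c * x⁻¹) (fun u => c * (u - 1)⁻¹) ?_ ?_ ?_ ?_ ?_
      · intro x hx
        have hx0 : x ≠ 0 := Finset.ne_of_mem_erase hx
        refine Finset.mem_erase.mpr ⟨?_, mem_univ _⟩
        intro hh
        have h1 : c * x⁻¹ = 0 := by
          have := hh
          linear_combination this
        rcases mul_eq_zero.mp h1 with h2 | h2
        · exact hc h2
        · exact hx0 (inv_eq_zero.mp h2)
      · intro u hu
        have hu1 : u ≠ 1 := Finset.ne_of_mem_erase hu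
        refine Finset.mem_erase.mpr ⟨?_, mem_univ _⟩
        intro hh
        rcases mul_eq_zero.mp hh with h2 | h2
        · exact hc h2
        · exact sub_ne_zero.mpr hu1 (inv_eq_zero.mp h2)
      · intro x hx
        have hx0 : x ≠ 0 := Finset.ne_of_mem_erase hx
        rw [add_sub_cancel_left]
        rw [mul_inv, inv_inv]
        field_simp
      · intro u hu
        have hu1 : u ≠ 1 := Finset.ne_of_mem_erase hu
        have hsub : (u - 1) ≠ 0 := sub_ne_zero.mpr hu1
        rw [mul_inv, inv_inv]
        field_simp
        ring
      · intro x hx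
        have hx0 : x ≠ 0 := Finset.ne_of_mem_erase hx
        calc (χ x : ℤ) * χ (c + x) = χ (x * (c + x)) := by rw [map_mul]
          _ = χ (x^2 * (1 + c * x⁻¹)) := by
              congr 1
              field_simp; ring
          _ = (χ (x^2) : ℤ) * χ (1 + c * x⁻¹) := by rw [map_mul]
          _ = χ (1 + c * x⁻¹) := by rw [quadraticChar_sq_one' hx0, one_mul]
    have step3 : ∑ u ∈ (univ : Finset F).erase 1, (χ u : ℤ)
        = (∑ u : F, (χ u : ℤ)) - χ 1 := by
      rw [← Finset.add_sum_erase _ _ (mem_univ (1:F))]; ring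
    rw [step1, step2, step3, quadraticChar_sum_zero hF2]
    simp

lemma pointwise72 (a b c t : ℤ) (ha : a = -1 ∨ a = 0 ∨ a = 1) (hb : b = -1 ∨ b = 0 ∨ b = 1)
    (hc : c = -1 ∨ c = 0 ∨ c = 1) (ht : t = -1 ∨ t = 0 ∨ t = 1) :
    72 * (if t = a + b + c then (1:ℤ) else 0) = ((72) + (-72) * t^2 + (36) * c * t + (-72) * c^2 + (108) * c^2 * t^2 + (36) * b * t + (-36) * b * c + (36) * b * c * t^2 + (-36) * b * c^2 * t + (-72) * b^2 + (108) * b^2 * t^2 + (-36) * b^2 * c * t + (108) * b^2 * c^2 + (-180) * b^2 * c^2 * t^2 + (36) * a * t + (-36) * a * c + (36) * a * c * t^2 + (-36) * a * c^2 * t + (-36) * a * b + (36) * a * b * t^2 + (-27) * a * b * c * t + (36) * a * b * c^2 + (-45) * a * b * c^2 * t^2 + (-36) * a * b^2 * t + (36) * a * b^2 * c + (-45) * a * b^2 * c * t^2 + (45) * a * b^2 * c^2 * t + (-72) * a^2 + (108) * a^2 * t^2 + (-36) * a^2 * c * t + (108) * a^2 * c^2 + (-180) * a^2 * c^2 * t^2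 + (-36) * a^2 * b * t + (36) * a^2 * b * c + (-45) * a^2 * b * c * t^2 + (45) * a^2 * b * c^2 * t + (108) * a^2 * b^2 + (-180) * a^2 * b^2 * t^2 + (45) * a^2 * b^2 * c * t + (-180) * a^2 * b^2 * c^2 + (315) * a^2 * b^2 * c^2 * t^2) := by
  rcases ha with rfl | rfl | rfl <;> rcases hb with rfl | rfl | rfl <;>
    rcases hc with rfl | rfl | rfl <;> rcases ht with rfl | rfl | rfl <;> decide

lemma key (hF2 : ringChar F ≠ 2) (hneg : (χ (-1 : F) : ℤ) = -1)
    (P00 P10 P01 P20 P02 P11 P21 P12 P22 : ℤ) (c : F) :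
    ∑ x : F, (P00 + P10 * (χ x) + P01 * (χ (c + x)) + P20 * (χ x)^2 + P02 * (χ (c + x))^2
      + P11 * ((χ x) * (χ (c + x))) + P21 * ((χ x)^2 * (χ (c + x)))
      + P12 * ((χ x) * (χ (c + x))^2) + P22 * ((χ x)^2 * (χ (c + x))^2))
    = P00 * q + P20 * (q - 1) + P02 * (q - 1) + P11 * (q * (1 - (χ c)^2) - 1)
      + P21 * (-(χ c)) + P12 * (χ c) + P22 * (q - 1 - (χ c)^2) := by
  simp only [Finset.sum_add_distrib, ← Finset.mul_sum]
  rw [s10 hF2, s01 hF2, s20, s02, s11 hF2, s21 hF2, s12 hF2 hneg, s22,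
    Finset.sum_const, Finset.card_univ, nsmul_eq_mul]
  ring

lemma master (hF2 : ringChar F ≠ 2) (hneg : (χ (-1 : F) : ℤ) = -1) :
    ∑ y0 : F, ∑ y1 : F, ∑ y2 : F, (72 * (if (χ (y0 + y1 + y2) : ℤ) = χ y0 + χ y1 + χ y2 then (1:ℤ) else 0))
    = 27*q^3 - 81*q^2 + 621*q - 495 := by
  have L3 : ∀ y0 y1 : F, ∑ y2 : F, (72 * (if (χ (y0 + y1 + y2) : ℤ) = χ y0 + χ y1 + χ y2 then (1:ℤ) else 0)) = ((-108) * (χ (y0 + y1))^2 + (72) * (χ y1) * (χ (y0 + y1)) + (180) * (χ y1)^2 * (χ (y0 + y1))^2 + (72) * (χ y0) * (χ (y0 + y1)) + (45) * (χ y0) * (χ y1) * (χ (y0 + y1))^2 + (-90) * (χ y0) * (χ y1)^2 * (χ (y0 + y1)) + (180) * (χ y0)^2 * (χ (y0 + y1))^2 + (-90) * (χ y0)^2 * (χ y1) * (χ (y0 + y1)) + (-315) * (χ y0)^2 * (χ y1)^2 * (χ (y0 + y1))^2 + (72) * q + (-36) * q * (χ (y0 + y1))^2 + (-72) * q * (χ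 y1)^2 + (36) * q * (χ y1)^2 * (χ (y0 + y1))^2 + (-36) * q * (χ y0) * (χ y1) + (27) * q * (χ y0) * (χ y1) * (χ (y0 + y1))^2 + (-72) * q * (χ y0)^2 + (36) * q * (χ y0)^2 * (χ (y0 + y1))^2 + (108) * q * (χ y0)^2 * (χ y1)^2 + (-45) * q * (χ y0)^2 * (χ y1)^2 * (χ (y0 + y1))^2) := by
    intro y0 y1
    calc ∑ y2 : F, (72 * (if (χ (y0 + y1 + y2) : ℤ) = χ y0 + χ y1 + χ y2 then (1:ℤ) else 0))
        = ∑ y2 : F, ((72) + (-72) * (χ (y0 + y1 + y2))^2 + (36) * (χ y2) * (χ (y0 + y1 + y2)) + (-72) * (χ y2)^2 + (108) * (χ y2)^2 * (χ (y0 + y1 + y2))^2 + (36) * (χ y1) * (χ (y0 + y1 + y2)) + (-36) * (χ y1) * (χ y2) + (36) * (χ y1) * (χ y2) * (χ (y0 + y1 + y2))^2 + (-36) * (χ y1) * (χ y2)^2 * (χ (y0 + y1 + y2)) + (-72) * (χ y1)^2 + (108) * (χ y1)^2 * (χ (y0 + y1 + y2))^2 + (-36) * (χ y1)^2 * (χ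 y2) * (χ (y0 + y1 + y2)) + (108) * (χ y1)^2 * (χ y2)^2 + (-180) * (χ y1)^2 * (χ y2)^2 * (χ (y0 + y1 + y2))^2 + (36) * (χ y0) * (χ (y0 + y1 + y2)) + (-36) * (χ y0) * (χ y2) + (36) * (χ y0) * (χ y2) * (χ (y0 + y1 + y2))^2 + (-36) * (χ y0) * (χ y2)^2 * (χ (y0 + y1 + y2)) + (-36) * (χ y0) * (χ y1) + (36) * (χ y0) * (χ y1) * (χ (y0 + y1 + y2))^2 + (-27) * (χ y0) * (χ y1) * (χ y2) * (χ (y0 + y1 + y2)) + (36) * (χ y0) * (χ y1) * (χ y2)^2 + (-45) * (χ y0) * (χ y1) * (χ y2)^2 * (χ (y0 + y1 + y2))^2 + (-36) * (χ y0) * (χ y1)^2 * (χ (y0 + y1 + y2)) + (36) * (χ y0) * (χ y1)^2 * (χ y2) + (-45) * (χ y0) * (χ y1)^2 * (χ y2) * (χ (y0 + y1 + y2))^2 + (45) * (χ y0) * (χ y1)^2 * (χ y2)^2 * (χ (y0 + y1 + y2)) + (-72) * (χ y0)^2 + (108) * (χ y0)^2 * (χ (y0 + y1 + y2))^2 + (-36)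 * (χ y0)^2 * (χ y2) * (χ (y0 + y1 + y2)) + (108) * (χ y0)^2 * (χ y2)^2 + (-180) * (χ y0)^2 * (χ y2)^2 * (χ (y0 + y1 + y2))^2 + (-36) * (χ y0)^2 * (χ y1) * (χ (y0 + y1 + y2)) + (36) * (χ y0)^2 * (χ y1) * (χ y2) + (-45) * (χ y0)^2 * (χ y1) * (χ y2) * (χ (y0 + y1 + y2))^2 + (45) * (χ y0)^2 * (χ y1) * (χ y2)^2 * (χ (y0 + y1 + y2)) + (108) * (χ y0)^2 * (χ y1)^2 + (-180) * (χ y0)^2 * (χ y1)^2 * (χ (y0 + y1 + y2))^2 + (45) * (χ y0)^2 * (χ y1)^2 * (χ y2) * (χ (y0 + y1 + y2)) + (-180) * (χ y0)^2 * (χ y1)^2 * (χ y2)^2 + (315) * (χ y0)^2 * (χ y1)^2 * (χ y2)^2 * (χ (y0 + y1 + y2))^2) :=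
          Finset.sum_congr rfl fun y2 _ => pointwise72 _ _ _ _ (tri y0) (tri y1) (tri y2) (tri _)
      _ = ∑ y2 : F, (((72) + (-72) * (χ y1)^2 + (-36) * (χ y0) * (χ y1) + (-72) * (χ y0)^2 + (108) * (χ y0)^2 * (χ y1)^2) + ((-36) * (χ y1) + (-36) * (χ y0) + (36) * (χ y0) * (χ y1)^2 + (36) * (χ y0)^2 * (χ y1)) * (χ y2) + ((36) * (χ y1) + (36) * (χ y0) + (-36) * (χ y0) * (χ y1)^2 + (-36) * (χ y0)^2 * (χ y1)) * (χ (y0 + y1 + y2)) + ((-72) + (108) * (χ y1)^2 + (36) * (χ y0) * (χ y1) + (108) * (χ y0)^2 + (-180) * (χ y0)^2 * (χ y1)^2) * (χ y2)^2 + ((-72) + (108) * (χ y1)^2 + (36) * (χ y0) * (χ y1) + (108) * (χ y0)^2 + (-180) * (χ y0)^2 * (χ y1)^2) * (χ (y0 + y1 + y2))^2 + ((36) + (-36) * (χ y1)^2 + (-27) * (χ y0) * (χ y1) + (-36) * (χ y0)^2 + (45) * (χ y0)^2 * (χ y1)^2) * ((χ y2) * (χ (y0 + y1 + y2))) + ((-36)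 * (χ y1) + (-36) * (χ y0) + (45) * (χ y0) * (χ y1)^2 + (45) * (χ y0)^2 * (χ y1)) * ((χ y2)^2 * (χ (y0 + y1 + y2))) + ((36) * (χ y1) + (36) * (χ y0) + (-45) * (χ y0) * (χ y1)^2 + (-45) * (χ y0)^2 * (χ y1)) * ((χ y2) * (χ (y0 + y1 + y2))^2) + ((108) + (-180) * (χ y1)^2 + (-45) * (χ y0) * (χ y1) + (-180) * (χ y0)^2 + (315) * (χ y0)^2 * (χ y1)^2) * ((χ y2)^2 * (χ (y0 + y1 + y2))^2)) :=
          Finset.sum_congr rfl fun y2 _ => by ring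
      _ = (((72) + (-72) * (χ y1)^2 + (-36) * (χ y0) * (χ y1) + (-72) * (χ y0)^2 + (108) * (χ y0)^2 * (χ y1)^2) * q + ((-72) + (108) * (χ y1)^2 + (36) * (χ y0) * (χ y1) + (108) * (χ y0)^2 + (-180) * (χ y0)^2 * (χ y1)^2) * (q - 1) + ((-72) + (108) * (χ y1)^2 + (36) * (χ y0) * (χ y1) + (108) * (χ y0)^2 + (-180) * (χ y0)^2 * (χ y1)^2) * (q - 1) + ((36) + (-36) * (χ y1)^2 + (-27) * (χ y0) * (χ y1) + (-36) * (χ y0)^2 + (45) * (χ y0)^2 * (χ y1)^2) * (q * (1 - (χ (y0 + y1))^2) - 1) + ((-36) * (χ y1) + (-36) * (χ y0) + (45) * (χ y0) * (χ y1)^2 + (45) * (χ y0)^2 * (χ y1)) * (-(χ (y0 + y1))) + ((36) * (χ y1) + (36) * (χ y0) + (-45) * (χ y0) * (χ y1)^2 + (-45) * (χ y0)^2 * (χ y1)) * (χ (y0 + y1)) + ((108) + (-180) * (χ y1)^2 + (-45) * (χ y0) * (χ y1) + (-180) * (χ y0)^2 + (315) * (χ y0)^2 * (χ y1)^2) * (q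 - 1 - (χ (y0 + y1))^2)) := key hF2 hneg _ _ _ _ _ _ _ _ _ (y0 + y1)
      _ = ((-108) * (χ (y0 + y1))^2 + (72) * (χ y1) * (χ (y0 + y1)) + (180) * (χ y1)^2 * (χ (y0 + y1))^2 + (72) * (χ y0) * (χ (y0 + y1)) + (45) * (χ y0) * (χ y1) * (χ (y0 + y1))^2 + (-90) * (χ y0) * (χ y1)^2 * (χ (y0 + y1)) + (180) * (χ y0)^2 * (χ (y0 + y1))^2 + (-90) * (χ y0)^2 * (χ y1) * (χ (y0 + y1)) + (-315) * (χ y0)^2 * (χ y1)^2 * (χ (y0 + y1))^2 + (72) * q + (-36) * q * (χ (y0 + y1))^2 + (-72) * q * (χ y1)^2 + (36) * q * (χ y1)^2 * (χ (y0 + y1))^2 + (-36) * q * (χ y0) * (χ y1) + (27) * q * (χ y0) * (χ y1) * (χ (y0 + y1))^2 + (-72) * q * (χ y0)^2 + (36) * q * (χ y0)^2 * (χ (y0 + y1))^2 + (108) * q * (χ y0)^2 * (χ y1)^2 + (-45) * q * (χ y0)^2 * (χ y1)^2 * (χ (y0 + y1))^2) := by ring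
  have L2 : ∀ y0 : F, ∑ y1 : F, ((-108) * (χ (y0 + y1))^2 + (72) * (χ y1) * (χ (y0 + y1)) + (180) * (χ y1)^2 * (χ (y0 + y1))^2 + (72) * (χ y0) * (χ (y0 + y1)) + (45) * (χ y0) * (χ y1) * (χ (y0 + y1))^2 + (-90) * (χ y0) * (χ y1)^2 * (χ (y0 + y1)) + (180) * (χ y0)^2 * (χ (y0 + y1))^2 + (-90) * (χ y0)^2 * (χ y1) * (χ (y0 + y1)) + (-315) * (χ y0)^2 * (χ y1)^2 * (χ (y0 + y1))^2 + (72) * q + (-36) * q * (χ (y0 + y1))^2 + (-72) * q * (χ y1)^2 + (36) * q * (χ y1)^2 * (χ (y0 + y1))^2 + (-36) * q * (χ y0) * (χ y1) + (27) * q * (χ y0) * (χ y1) * (χ (y0 + y1))^2 + (-72) * q * (χ y0)^2 + (36) * q * (χ y0)^2 * (χ (y0 + y1))^2 + (108) * q * (χ y0)^2 * (χ y1)^2 + (-45) * q * (χ y0)^2 * (χ y1)^2 * (χ (y0 + y1))^2) = ((-144) + (180) * (χ y0)^2 + (315) * (χ y0)^4 + (216) * q + (-405) * q * (χ y0)^2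 + (135) * q * (χ y0)^4 + (27) * q^2 * (χ y0)^2) := by
    intro y0
    calc ∑ y1 : F, ((-108) * (χ (y0 + y1))^2 + (72) * (χ y1) * (χ (y0 + y1)) + (180) * (χ y1)^2 * (χ (y0 + y1))^2 + (72) * (χ y0) * (χ (y0 + y1)) + (45) * (χ y0) * (χ y1) * (χ (y0 + y1))^2 + (-90) * (χ y0) * (χ y1)^2 * (χ (y0 + y1)) + (180) * (χ y0)^2 * (χ (y0 + y1))^2 + (-90) * (χ y0)^2 * (χ y1) * (χ (y0 + y1)) + (-315) * (χ y0)^2 * (χ y1)^2 * (χ (y0 + y1))^2 + (72) * q + (-36) * q * (χ (y0 + y1))^2 + (-72) * q * (χ y1)^2 + (36) * q * (χ y1)^2 * (χ (y0 + y1))^2 + (-36) * q * (χ y0) * (χ y1) + (27) * q * (χ y0) * (χ y1) * (χ (y0 + y1))^2 + (-72) * q * (χ y0)^2 + (36) * q * (χ y0)^2 * (χ (y0 + y1))^2 + (108) * q * (χ y0)^2 * (χ y1)^2 + (-45) * q * (χ y0)^2 * (χ y1)^2 * (χ (y0 + y1))^2)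
        = ∑ y1 : F, (((72) * q + (-72) * q * (χ y0)^2) + ((-36) * q * (χ y0)) * (χ y1) + ((72) * (χ y0)) * (χ (y0 + y1)) + ((-72) * q + (108) * q * (χ y0)^2) * (χ y1)^2 + ((-108) + (180) * (χ y0)^2 + (-36) * q + (36) * q * (χ y0)^2) * (χ (y0 + y1))^2 + ((72) + (-90) * (χ y0)^2) * ((χ y1) * (χ (y0 + y1))) + ((-90) * (χ y0)) * ((χ y1)^2 * (χ (y0 + y1))) + ((45) * (χ y0) + (27) * q * (χ y0)) * ((χ y1) * (χ (y0 + y1))^2) + ((180) + (-315) * (χ y0)^2 + (36) * q + (-45) * q * (χ y0)^2) * ((χ y1)^2 * (χ (y0 + y1))^2)) :=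
          Finset.sum_congr rfl fun y1 _ => by ring
      _ = (((72) * q + (-72) * q * (χ y0)^2) * q + ((-72) * q + (108) * q * (χ y0)^2) * (q - 1) + ((-108) + (180) * (χ y0)^2 + (-36) * q + (36) * q * (χ y0)^2) * (q - 1) + ((72) + (-90) * (χ y0)^2) * (q * (1 - (χ (y0))^2) - 1) + ((-90) * (χ y0)) * (-(χ (y0))) + ((45) * (χ y0) + (27) * q * (χ y0)) * (χ (y0)) + ((180) + (-315) * (χ y0)^2 + (36) * q + (-45) * q * (χ y0)^2) * (q - 1 - (χ (y0))^2)) := key hF2 hneg _ _ _ _ _ _ _ _ _ y0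
      _ = ((-144) + (180) * (χ y0)^2 + (315) * (χ y0)^4 + (216) * q + (-405) * q * (χ y0)^2 + (135) * q * (χ y0)^4 + (27) * q^2 * (χ y0)^2) := by ring
  calc ∑ y0 : F, ∑ y1 : F, ∑ y2 : F, (72 * (if (χ (y0 + y1 + y2) : ℤ) = χ y0 + χ y1 + χ y2 then (1:ℤ) else 0))
      = ∑ y0 : F, ((-144) + (180) * (χ y0)^2 + (315) * (χ y0)^4 + (216) * q + (-405) * q * (χ y0)^2 + (135) * q * (χ y0)^4 + (27) * q^2 * (χ y0)^2) :=
        Finset.sum_congr rfl fun y0 _ => ((Finset.sum_congr rfl fun y1 _ => L3 y0 y1).trans (L2 y0))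
    _ = ∑ y0 : F, (((-144) + (216) * q) + ((180) + (-405) * q + (27) * q^2) * (χ y0)^2 + ((315) + (135) * q) * (χ y0)^4) :=
        Finset.sum_congr rfl fun y0 _ => by ring
    _ = 27*q^3 - 81*q^2 + 621*q - 495 := by
        rw [Finset.sum_add_distrib, Finset.sum_add_distrib, ← Finset.mul_sum, ← Finset.mul_sum,
          s20, s40, Finset.sum_const, Finset.card_univ, nsmul_eq_mul]
        ring

end


/-- If `d` is odd and `η(e0) = η(e1) = η(e2) = -1`, then the number of
points of `ℙ²(F_q)` on the curve `C = 0` equals `(3q² - 6q + 63)/8`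
(i.e. `n(n + q - 1)/2 + 3q` with `n = (q-7)/2`). -/
theorem statement16 (p h : ℕ) (hp : Nat.Prime p) (hp3 : 3 < p) (hh : 0 < h)
    (F : Type) [Field F] [Fintype F] (hcard : Fintype.card F = p ^ h)
    (d : ℕ) (hd : p ^ h = 2 * d + 1) (hodd : Odd d) (e0 e1 e2 : F)
    (h0 : e0 ^ d = -1) (h1 : e1 ^ d = -1) (h2 : e2 ^ d = -1) :
    (8 * Nat.card {x : Projectivization F (Fin 3 → F) //
        MvPolynomial.eval x.rep (fermatSlice F d e0 e1 e2) = 0} : ℤ) =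
      3 * (p ^ h : ℤ) ^ 2 - 6 * (p ^ h : ℤ) + 63 := by
  classical
  -- basic characteristic facts
  have hp5 : 5 ≤ p := by
    have h2 := hp.two_le
    have h4 : p ≠ 4 := fun h4 => by rw [h4] at hp; norm_num at hp
    omega
  obtain ⟨n, hrp, hcn⟩ := FiniteField.card F (ringChar F)
  have hring : ringChar F = p := by
    have hdvd : p ∣ ringChar F ^ (n : ℕ) := by
      rw [← hcn, hcard]; exact dvd_pow_self p (by omega)
    exact ((Nat.prime_dvd_prime_iff_eq hp hrp).mp (hp.dvd_of_dvd_pow hdvd)).symm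
  haveI hcharp : CharP F p := hring ▸ ringChar.charP F
  have hF2 : ringChar F ≠ 2 := by omega
  have hq5 : 5 ≤ Fintype.card F := by
    rw [hcard]
    calc 5 ≤ p := hp5
      _ ≤ p ^ h := Nat.le_self_pow hh.ne' p
  have hd0 : d ≠ 0 := by rw [hcard] at hq5; omega
  have hd2 : Fintype.card F / 2 = d := by rw [hcard, hd]; omega
  have hneg : (quadraticChar F (-1) : ℤ) = -1 := by
    rw [quadraticChar_neg_one hF2]
    apply ZMod.χ₄_nat_three_mod_four
    obtain ⟨m, hm⟩ := hodd
    rw [hcard, hd]; omega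
  have powchi : ∀ x : F, x ^ d = ((quadraticChar F x : ℤ) : F) := by
    intro x
    rw [← hd2]
    exact (quadraticChar_eq_pow_of_char_ne_two' hF2 x).symm
  have castinj : ∀ m : ℤ, -4 ≤ m → m ≤ 4 → ((m : ℤ) : F) = 0 → m = 0 := by
    intro m hm1 hm2 hm0
    have hdvd : (p : ℤ) ∣ m := (CharP.intCast_eq_zero_iff F p m).mp hm0
    refine Int.eq_zero_of_abs_lt_dvd hdvd ?_
    have hple : (5 : ℤ) ≤ (p : ℤ) := by exact_mod_cast hp5
    rw [abs_lt]; omega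
  have chie : ∀ e : F, e ^ d = -1 → (quadraticChar F e : ℤ) = -1 := by
    intro e he
    have h1 : ((quadraticChar F e : ℤ) : F) = -1 := by rw [← powchi e]; exact he
    have h2 : ((quadraticChar F e + 1 : ℤ) : F) = 0 := by push_cast; rw [h1]; ring
    have hb : -4 ≤ (quadraticChar F e : ℤ) + 1 ∧ (quadraticChar F e : ℤ) + 1 ≤ 4 := by
      rcases tri e with h | h | h <;> omega
    have h3 := castinj _ hb.1 hb.2 h2
    omega
  have he0 := chie e0 h0
  have he1 := chie e1 h1
  have he2 := chie e2 h2
  have he0' : e0 ≠ 0 := fun hz => by rw [hz, zero_pow hd0] at h0; exact one_ne_zero (α := F) (by linear_combination h0)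
  have he1' : e1 ≠ 0 := fun hz => by rw [hz, zero_pow hd0] at h1; exact one_ne_zero (α := F) (by linear_combination h1)
  have he2' : e2 ≠ 0 := fun hz => by rw [hz, zero_pow hd0] at h2; exact one_ne_zero (α := F) (by linear_combination h2)
  have eval_fs : ∀ v : Fin 3 → F, MvPolynomial.eval v (fermatSlice F d e0 e1 e2)
      = v 0 ^ d + v 1 ^ d + v 2 ^ d + (e0 * v 0 + e1 * v 1 + e2 * v 2) ^ d := by
    intro v; simp [fermatSlice]
  have hmul : ∀ (e x : F), (quadraticChar F e : ℤ) = -1 →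
      (quadraticChar F x : ℤ) = -(quadraticChar F (e * x) : ℤ) := by
    intro e x he; rw [map_mul, he]; ring
  -- the key condition
  have cond : ∀ v : Fin 3 → F, (MvPolynomial.eval v (fermatSlice F d e0 e1 e2) = 0 ↔
      (quadraticChar F (e0 * v 0 + e1 * v 1 + e2 * v 2) : ℤ) =
        quadraticChar F (e0 * v 0) + quadraticChar F (e1 * v 1) + quadraticChar F (e2 * v 2)) := by
    intro v
    have hev : MvPolynomial.eval v (fermatSlice F d e0 e1 e2)
        = (((quadraticChar F (e0 * v 0 + e1 * v 1 + e2 * v 2) : ℤ)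
            - quadraticChar F (e0 * v 0) - quadraticChar F (e1 * v 1) - quadraticChar F (e2 * v 2) : ℤ) : F) := by
      rw [eval_fs v, powchi (v 0), powchi (v 1), powchi (v 2), powchi (e0 * v 0 + e1 * v 1 + e2 * v 2),
        hmul e0 (v 0) he0, hmul e1 (v 1) he1, hmul e2 (v 2) he2]
      push_cast; ring
    rw [hev]
    constructor
    · intro hz
      have hb : -4 ≤ ((quadraticChar F (e0 * v 0 + e1 * v 1 + e2 * v 2) : ℤ)
            - quadraticChar F (e0 * v 0) - quadraticChar F (e1 * v 1) - quadraticChar F (e2 * v 2))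
          ∧ ((quadraticChar F (e0 * v 0 + e1 * v 1 + e2 * v 2) : ℤ)
            - quadraticChar F (e0 * v 0) - quadraticChar F (e1 * v 1) - quadraticChar F (e2 * v 2)) ≤ 4 := by
        rcases tri (e0 * v 0 + e1 * v 1 + e2 * v 2) with h | h | h <;>
          rcases tri (e0 * v 0) with h' | h' | h' <;>
          rcases tri (e1 * v 1) with h'' | h'' | h'' <;>
          rcases tri (e2 * v 2) with h''' | h''' | h''' <;> omega
      have := castinj _ hb.1 hb.2 hz
      omega
    · intro heq
      rw [show ((quadraticChar F (e0 * v 0 + e1 * v 1 + e2 * v 2) : ℤ)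
            - quadraticChar F (e0 * v 0) - quadraticChar F (e1 * v 1) - quadraticChar F (e2 * v 2)) = 0 from by omega]
      exact Int.cast_zero
  -- the counting set
  set fs := fermatSlice F d e0 e1 e2 with hfs
  set N : ℕ := (univ.filter fun v : Fin 3 → F => MvPolynomial.eval v fs = 0).card with hN
  -- change of variables
  set Ψ : (F × F × F) ≃ (Fin 3 → F) :=
    { toFun := fun y => ![e0⁻¹ * y.1, e1⁻¹ * y.2.1, e2⁻¹ * y.2.2]
      invFun := fun v => (e0 * v 0, e1 * v 1, e2 * v 2)
      left_inv := by
        rintro ⟨y0, y1, y2⟩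
        simp only [Matrix.cons_val_zero, Matrix.cons_val_one, Matrix.head_cons,
          Matrix.cons_val_two, Matrix.tail_cons]
        field_simp
      right_inv := by
        intro v
        funext i
        fin_cases i <;>
          simp only [Matrix.cons_val_zero, Matrix.cons_val_one, Matrix.head_cons,
            Matrix.cons_val_two, Matrix.tail_cons] <;> field_simp <;> try rfl } with hΨ
  have hNsum : (N : ℤ) = ∑ y0 : F, ∑ y1 : F, ∑ y2 : F,
      (if (quadraticChar F (y0 + y1 + y2) : ℤ)
          = quadraticChar F y0 + quadraticChar F y1 + quadraticChar F y2 then (1:ℤ) else 0) := by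
    have step1 : (N : ℤ) = ∑ v : Fin 3 → F, (if MvPolynomial.eval v fs = 0 then (1:ℤ) else 0) := by
      rw [hN, Finset.card_filter]
      push_cast
      rfl
    rw [step1, ← Equiv.sum_comp Ψ (fun v => if MvPolynomial.eval v fs = 0 then (1:ℤ) else 0),
      Fintype.sum_prod_type]
    refine Finset.sum_congr rfl fun y0 _ => ?_
    rw [Fintype.sum_prod_type]
    refine Finset.sum_congr rfl fun y1 _ => Finset.sum_congr rfl fun y2 _ => ?_
    have hv := cond (Ψ (y0, y1, y2))
    have hc0 : (Ψ (y0, y1, y2)) 0 = e0⁻¹ * y0 := rfl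
    have hc1 : (Ψ (y0, y1, y2)) 1 = e1⁻¹ * y1 := rfl
    have hc2 : (Ψ (y0, y1, y2)) 2 = e2⁻¹ * y2 := rfl
    rw [hc0, hc1, hc2, mul_inv_cancel_left₀ he0', mul_inv_cancel_left₀ he1',
      mul_inv_cancel_left₀ he2'] at hv
    exact if_congr hv rfl rfl
  have hN72 : (72:ℤ) * N = 27*(Fintype.card F : ℤ)^3 - 81*(Fintype.card F : ℤ)^2
      + 621*(Fintype.card F : ℤ) - 495 := by
    rw [hNsum]
    simp only [Finset.mul_sum]
    exact master hF2 hneg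
  -- homogeneity
  have hom : ∀ (c : F) (w : Fin 3 → F), MvPolynomial.eval (c • w) fs = c ^ d * MvPolynomial.eval w fs := by
    intro c w
    rw [eval_fs, eval_fs]
    simp only [Pi.smul_apply, smul_eq_mul]
    rw [show e0 * (c * w 0) + e1 * (c * w 1) + e2 * (c * w 2)
        = c * (e0 * w 0 + e1 * w 1 + e2 * w 2) from by ring,
      mul_pow, mul_pow, mul_pow, mul_pow]
    ring
  -- the projective count
  set K : ℕ := Nat.card {x : Projectivization F (Fin 3 → F) // MvPolynomial.eval x.rep fs = 0} with hK
  have hbij : Nat.card {v : Fin 3 → F // MvPolynomial.eval v fs = 0 ∧ v ≠ 0}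
      = K * (Fintype.card F - 1) := by
    have hcu : Nat.card Fˣ = Fintype.card F - 1 := by
      rw [Nat.card_eq_fintype_card, Fintype.card_units]
    rw [← hcu, hK, ← Nat.card_prod]
    refine (Nat.card_eq_of_bijective
      (fun z : {x : Projectivization F (Fin 3 → F) // MvPolynomial.eval x.rep fs = 0} × Fˣ =>
        (⟨(z.2 : F) • z.1.1.rep, by
            rw [hom, z.1.2, mul_zero]
          , smul_ne_zero (Units.ne_zero z.2) z.1.1.rep_nonzero⟩ :
          {v : Fin 3 → F // MvPolynomial.eval v fs = 0 ∧ v ≠ 0})) ⟨?_, ?_⟩).symm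
    · rintro ⟨⟨x, hx⟩, c⟩ ⟨⟨x', hx'⟩, c'⟩ hzw
      have heq : (c : F) • x.rep = (c' : F) • x'.rep := congrArg Subtype.val hzw
      have hxx : x = x' := by
        have hmk : Projectivization.mk F x.rep x.rep_nonzero
            = Projectivization.mk F x'.rep x'.rep_nonzero := by
          rw [Projectivization.mk_eq_mk_iff]
          refine ⟨c⁻¹ * c', ?_⟩
          rw [Units.smul_def, Units.val_mul, mul_smul, ← heq]
          rw [smul_smul, Units.val_inv_eq_inv_val, inv_mul_cancel₀ (Units.ne_zero c), one_smul]
        rwa [Projectivization.mk_rep, Projectivization.mk_rep] at hmk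
      subst hxx
      have hcc : c = c' := by
        have hsub : ((c : F) - (c' : F)) • x.rep = 0 := by
          rw [sub_smul, heq, sub_self]
        rcases smul_eq_zero.mp hsub with hs | hs
        · exact Units.ext (sub_eq_zero.mp hs)
        · exact absurd hs x.rep_nonzero
      rw [hcc]
    · rintro ⟨v, hv0, hvne⟩
      obtain ⟨a, ha⟩ := Projectivization.exists_smul_eq_mk_rep F v hvne
      have hrep0 : MvPolynomial.eval (Projectivization.mk F v hvne).rep fs = 0 := by
        rw [← ha, Units.smul_def, hom, hv0, mul_zero]
      refine ⟨⟨⟨Projectivization.mk F v hvne, hrep0⟩, a⁻¹⟩, ?_⟩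
      apply Subtype.ext
      show ((a⁻¹ : Fˣ) : F) • (Projectivization.mk F v hvne).rep = v
      rw [← ha, Units.smul_def, smul_smul, Units.val_inv_eq_inv_val,
        inv_mul_cancel₀ (Units.ne_zero a), one_smul]
  have hzero : MvPolynomial.eval (0 : Fin 3 → F) fs = 0 := by
    rw [eval_fs]
    simp only [Pi.zero_apply, mul_zero, add_zero, zero_pow hd0]
  have hsplit : N = K * (Fintype.card F - 1) + 1 := by
    have hmem : (0 : Fin 3 → F) ∈ univ.filter fun v : Fin 3 → F => MvPolynomial.eval v fs = 0 :=
      Finset.mem_filter.mpr ⟨Finset.mem_univ _, hzero⟩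
    have hset : (univ.filter fun v : Fin 3 → F => MvPolynomial.eval v fs = 0 ∧ v ≠ 0)
        = (univ.filter fun v : Fin 3 → F => MvPolynomial.eval v fs = 0).erase 0 := by
      ext v
      simp only [Finset.mem_filter, Finset.mem_erase, Finset.mem_univ, true_and]
      tauto
    have hcaff : Nat.card {v : Fin 3 → F // MvPolynomial.eval v fs = 0 ∧ v ≠ 0}
        = (univ.filter fun v : Fin 3 → F => MvPolynomial.eval v fs = 0 ∧ v ≠ 0).card := by
      rw [Nat.card_eq_fintype_card, Fintype.card_subtype]
    have hNpos : 1 ≤ N := Finset.card_pos.mpr ⟨0, hmem⟩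
    have := hbij
    rw [hcaff, hset, Finset.card_erase_of_mem hmem, ← hN] at this
    omega
  -- final arithmetic
  have hq1 : ((Fintype.card F - 1 : ℕ) : ℤ) = (Fintype.card F : ℤ) - 1 := by
    have := Fintype.one_lt_card (α := F)
    omega
  have hNZ : (N : ℤ) = K * ((Fintype.card F : ℤ) - 1) + 1 := by
    rw [hsplit]; push_cast [hq1]; ring
  rw [hNZ] at hN72
  have hcardZ : ((p : ℤ) ^ h) = (Fintype.card F : ℤ) := by rw [hcard]; push_cast; ring
  rw [show ((p : ℤ) ^ h) = ((p : ℕ) ^ h : ℤ) from by push_cast; ring] at *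
  have hgoal : (9 * ((Fintype.card F : ℤ) - 1)) * (8 * (K : ℤ))
      = (9 * ((Fintype.card F : ℤ) - 1)) * (3 * (Fintype.card F : ℤ)^2 - 6 * (Fintype.card F : ℤ) + 63) := by
    linear_combination hN72
  have hne : (9 * ((Fintype.card F : ℤ) - 1)) ≠ 0 := by
    have : (5 : ℤ) ≤ (Fintype.card F : ℤ) := by exact_mod_cast hq5
    intro hcon
    omega
  have hfin : 8 * (K : ℤ) = 3 * (Fintype.card F : ℤ)^2 - 6 * (Fintype.card F : ℤ) + 63 :=
    mul_left_cancel₀ hne hgoal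
  rw [show ((p : ℤ) ^ h) = (Fintype.card F : ℤ) from by rw [hcard]; push_cast; ring]
  push_cast
  push_cast at hfin
  convert hfin using 2
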